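/- In an instance with strict complete preferences, rooms of size 3, best-roommate comparison, the serial dictatorship procedure (each dictator in turn forms a fixed pair with her most-preferred available player, pairs are merged into rooms of size 3, subject to room-count constraints) produces a feasible assignment, i.e., a partition of all players into rooms of size exactly 3. -/

import Mathlib

open Finset

attribute [local instance] Classical.propDecidable

noncomputable section

variable {P : Type*} [Fintype P] [DecidableEq P]

/-- The number of roommates already fixed together with player `i` in the partial
assignment `f` (0 if `i` is not yet assigned to a room). -/
def roommateCount {k : ℕ} (f : P → Option (Fin k)) (i : P) : ℕ :=
  if f i = none then 0 else (univ.filter fun p => p ≠ i ∧ f p = f i).card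

/-- The number of rooms already opened in the partial assignment `f`. -/
def openCount {k : ℕ} (f : P → Option (Fin k)) : ℕ :=
  (univ.filter fun j : Fin k => ∃ p, f p = some j).card

/-- Player `j` is available to dictator `i` in the partial assignment `f`:
(1) the number of roommates already fixed with `i` or `j` is at most one in
total, or `i` and `j` already share a room; and (2) if no further room can be
opened, `j` must already be assigned to a room. -/
def Available {k : ℕ} (f : P → Option (Fin k)) (i j : P) : Prop :=
  j ≠ i ∧
  (roommateCount f i + roommateCount f j ≤ 1 ∨ (f i ≠ none ∧ f i = f j)) ∧
  (openCount f = k → f j ≠ none)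

/-- A not-yet-opened room, if one exists. -/
def freshRoom {k : ℕ} (f : P → Option (Fin k)) : Option (Fin k) :=
  if h : (univ.filter fun j : Fin k => ∀ p, f p ≠ some j).Nonempty then some h.choose
  else none

/-- One round of serial dictatorship (best-roommate version, rooms of size 3):
dictator `i` points at her most-preferred available player `j` and the pair is
fixed: if one of them is already in a room the other joins her, otherwise a new
room is opened for the pair. -/
def sdStep {k : ℕ} (rk : P → P → ℕ) (f : P → Option (Fin k)) (i : P) :
    P → Option (Fin k) :=
  let S : Finset P := univ.filter fun j => Available f i j
  if hS : S.Nonempty then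
    let j : P := (Finset.exists_min_image S (rk i) hS).choose
    match f i, f j with
    | some t, _ => fun p => if p = j then some t else f p
    | none, some t => fun p => if p = i then some t else f p
    | none, none =>
        match freshRoom f with
        | some t => fun p => if p = i ∨ p = j then some t else f p
        | none => f
  else f

/-- The outcome of serial dictatorship processing the dictators in the order
given by `order`, starting from the empty assignment. -/
def sdRun {k : ℕ} (rk : P → P → ℕ) (order : List P) : P → Option (Fin k) :=
  order.foldl (sdStep rk) fun _ => none

lemma sdStep_cases {k : ℕ} (rk : P → P → ℕ) (f : P → Option (Fin k)) (i : P) :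
    ((¬ ∃ j, Available f i j) ∧ sdStep rk f i = f) ∨
    ∃ j, Available f i j ∧
      ((∃ t, f i = some t ∧ sdStep rk f i = fun p => if p = j then some t else f p) ∨
       (∃ t, f i = none ∧ f j = some t ∧
          sdStep rk f i = fun p => if p = i then some t else f p) ∨
       (f i = none ∧ f j = none ∧ freshRoom f = none ∧ sdStep rk f i = f) ∨
       (∃ t, f i = none ∧ f j = none ∧ freshRoom f = some t ∧
          sdStep rk f i = fun p => if p = i ∨ p = j then some t else f p)) := by
  by_cases hS : (univ.filter fun j => Available f i j).Nonempty
  · right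
    have hjS := (Finset.exists_min_image _ (rk i) hS).choose_spec.1
    rw [Finset.mem_filter] at hjS
    refine ⟨(Finset.exists_min_image _ (rk i) hS).choose, hjS.2, ?_⟩
    have hstep : sdStep rk f i =
        (match f i, f ((Finset.exists_min_image _ (rk i) hS).choose) with
        | some t, _ => fun p => if p = (Finset.exists_min_image _ (rk i) hS).choose then some t else f p
        | none, some t => fun p => if p = i then some t else f p
        | none, none =>
            match freshRoom f with
            | some t => fun p => if p = i ∨ p = (Finset.exists_min_image _ (rk i) hS).choose then some t else f p
            | none => f) := by
      simp only [sdStep]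
      rw [dif_pos hS]
    split at hstep
    · next t heq => exact Or.inl ⟨t, heq, hstep⟩
    · next t heq1 heq2 => exact Or.inr (Or.inl ⟨t, heq1, heq2, hstep⟩)
    · next heq1 heq2 =>
        split at hstep
        · next t heq3 => exact Or.inr (Or.inr (Or.inr ⟨t, heq1, heq2, heq3, hstep⟩))
        · next heq3 => exact Or.inr (Or.inr (Or.inl ⟨heq1, heq2, heq3, hstep⟩))
  · left
    constructor
    · intro ⟨j, hj⟩; exact hS ⟨j, Finset.mem_filter.mpr ⟨mem_univ j, hj⟩⟩
    · simp only [sdStep]; rw [dif_neg hS]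

def SdInv {k : ℕ} (f : P → Option (Fin k)) : Prop :=
  ∀ t : Fin k, (univ.filter fun p => f p = some t).card ≤ 3

lemma rc_succ {k : ℕ} (f : P → Option (Fin k)) (j : P) (t : Fin k) (h : f j = some t) :
    roommateCount f j + 1 = (univ.filter fun p => f p = some t).card := by
  have hj : j ∈ univ.filter fun p => f p = some t := by simp [h]
  have herase : (univ.filter fun p => f p = some t).erase j
      = univ.filter fun p => p ≠ j ∧ f p = some t := by
    ext p; simp [Finset.mem_erase, and_comm]
  have hc := Finset.card_erase_of_mem hj
  have hpos : 0 < (univ.filter fun p => f p = some t).card := Finset.card_pos.mpr ⟨j, hj⟩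
  simp only [roommateCount, h]
  rw [if_neg (by simp), ← herase, hc]
  omega

lemma freshRoom_spec {k : ℕ} (f : P → Option (Fin k)) (t : Fin k)
    (h : freshRoom f = some t) : ∀ p, f p ≠ some t := by
  unfold freshRoom at h
  split at h
  · next hne =>
      have hs := hne.choose_spec
      rw [Finset.mem_filter] at hs
      exact Option.some.inj h ▸ hs.2
  · simp at h

lemma openCount_le {k : ℕ} (f : P → Option (Fin k)) : openCount f ≤ k := by
  have := Finset.card_filter_le (univ : Finset (Fin k)) (fun j => ∃ p, f p = some j)
  simpa [openCount] using this

lemma freshRoom_ne_none {k : ℕ} (f : P → Option (Fin k)) (h : openCount f < k) :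
    freshRoom f ≠ none := by
  unfold freshRoom
  split
  · simp
  · next hne =>
      exfalso
      have hall : ∀ t : Fin k, ∃ p, f p = some t := by
        intro t
        by_contra hc
        push_neg at hc
        exact hne ⟨t, Finset.mem_filter.mpr ⟨mem_univ t, fun p => hc p⟩⟩
      have : openCount f = k := by
        unfold openCount
        rw [Finset.filter_true_of_mem (fun t _ => hall t)]
        simp
      omega

lemma sdStep_ne_none {k : ℕ} (rk : P → P → ℕ) (f : P → Option (Fin k)) (i q : P)
    (hq : f q ≠ none) : sdStep rk f i q ≠ none := by
  rcases sdStep_cases rk f i with ⟨-, he⟩ | ⟨j, -, ⟨t, -, he⟩ | ⟨t, -, -, he⟩ | ⟨-, -, -, he⟩ | ⟨t, -, -, -, he⟩⟩ <;>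
    rw [he] <;> first
      | exact hq
      | (dsimp only; split <;> simp [hq])

lemma inv_sdStep {k : ℕ} (rk : P → P → ℕ) (f : P → Option (Fin k)) (i : P)
    (h : SdInv f) : SdInv (sdStep rk f i) := by
  have hsub1 : ∀ (g : P → Option (Fin k)) (a : P) (s : Fin k),
      (∀ p, p ≠ a → g p = f p) →
      (univ.filter fun p => g p = some s) ⊆ insert a (univ.filter fun p => f p = some s) := by
    intro g a s hg p hp
    rw [Finset.mem_filter] at hp
    by_cases hpa : p = a
    · simp [hpa]
    · exact Finset.mem_insert_of_mem (Finset.mem_filter.mpr ⟨mem_univ p, (hg p hpa) ▸ hp.2⟩)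
  have hsub2 : ∀ (g : P → Option (Fin k)) (s : Fin k),
      (∀ p, g p = some s → f p = some s) →
      (univ.filter fun p => g p = some s).card ≤ 3 := by
    intro g s hg
    refine le_trans (Finset.card_le_card ?_) (h s)
    intro p hp
    rw [Finset.mem_filter] at hp ⊢
    exact ⟨mem_univ p, hg p hp.2⟩
  rcases sdStep_cases rk f i with ⟨-, he⟩ | ⟨j, hav, hcase⟩
  · rwa [he]
  rcases hcase with ⟨t, hfi, he⟩ | ⟨t, hfi, hfj, he⟩ | ⟨-, -, -, he⟩ | ⟨t, hfi, hfj, hfr, he⟩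
  · -- j joins i's room t
    intro s
    rw [he]
    by_cases hst : s = t
    · subst hst
      by_cases hfjt : f j = some s
      · have : (fun p => if p = j then some s else f p) = f := by
          funext p; split
          · next hpj => rw [hpj, hfjt]
          · rfl
        rw [this]; exact h s
      · have hle2 : (univ.filter fun p => f p = some s).card ≤ 2 := by
          rcases hav.2.1 with hle | ⟨-, heqq⟩
          · have := rc_succ f i s hfi; omega
          · rw [hfi] at heqq; exact absurd heqq.symm hfjt
        have hsub := hsub1 (fun p => if p = j then some s else f p) j s
          (fun p hp => by simp [hp])
        calc (univ.filter fun p => (if p = j then some s else f p) = some s).card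
            ≤ (insert j (univ.filter fun p => f p = some s)).card := Finset.card_le_card hsub
          _ ≤ (univ.filter fun p => f p = some s).card + 1 := Finset.card_insert_le _ _
          _ ≤ 3 := by omega
    · exact hsub2 _ s (fun p hp => by
        split at hp
        · exact absurd (Option.some.inj hp).symm hst
        · exact hp)
  · -- i joins j's room t
    intro s
    rw [he]
    by_cases hst : s = t
    · subst hst
      have hle2 : (univ.filter fun p => f p = some s).card ≤ 2 := by
        rcases hav.2.1 with hle | ⟨hne, -⟩
        · have := rc_succ f j s hfj
          have hrci : roommateCount f i = 0 := by simp [roommateCount, hfi]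
          omega
        · exact absurd hfi hne
      have hsub := hsub1 (fun p => if p = i then some s else f p) i s
        (fun p hp => by simp [hp])
      calc (univ.filter fun p => (if p = i then some s else f p) = some s).card
          ≤ (insert i (univ.filter fun p => f p = some s)).card := Finset.card_le_card hsub
        _ ≤ (univ.filter fun p => f p = some s).card + 1 := Finset.card_insert_le _ _
        _ ≤ 3 := by omega
    · exact hsub2 _ s (fun p hp => by
        split at hp
        · exact absurd (Option.some.inj hp).symm hst
        · exact hp)
  · rwa [he]
  · -- fresh room t for i and j
    intro s
    rw [he]
    by_cases hst : s = t
    · subst hst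
      have hfresh := freshRoom_spec f s hfr
      have hsub : (univ.filter fun p => (if p = i ∨ p = j then some s else f p) = some s)
          ⊆ {i, j} := by
        intro p hp
        rw [Finset.mem_filter] at hp
        rcases hp with ⟨-, hp⟩
        split at hp
        · next hij => simp [hij]
        · exact absurd hp (hfresh p)
      calc (univ.filter fun p => (if p = i ∨ p = j then some s else f p) = some s).card
          ≤ ({i, j} : Finset P).card := Finset.card_le_card hsub
        _ ≤ 2 := Finset.card_insert_le _ _ |>.trans (by simp)
        _ ≤ 3 := by omega
    · exact hsub2 _ s (fun p hp => by
        split at hp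
        · exact absurd (Option.some.inj hp).symm hst
        · exact hp)

lemma fiber_sum {k : ℕ} (f : P → Option (Fin k)) :
    (univ.filter fun p => f p = none).card
      + ∑ t : Fin k, (univ.filter fun p => f p = some t).card = Fintype.card P := by
  have h := Finset.card_eq_sum_card_fiberwise
    (f := f) (s := (univ : Finset P)) (t := (univ : Finset (Option (Fin k))))
    (fun x _ => mem_univ (f x))
  rw [Finset.card_univ] at h
  rw [h, univ_option, Finset.sum_insertNone]

lemma occupied_bound {k : ℕ} (f : P → Option (Fin k)) (h : SdInv f) :
    ∑ t : Fin k, (univ.filter fun p => f p = some t).card ≤ 3 * openCount f := by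
  classical
  have hsplit : ∑ t : Fin k, (univ.filter fun p => f p = some t).card
      = ∑ t ∈ univ.filter (fun j : Fin k => ∃ p, f p = some j),
          (univ.filter fun p => f p = some t).card := by
    rw [Finset.sum_filter]
    apply Finset.sum_congr rfl
    intro t _
    split
    · rfl
    · next hno =>
        push_neg at hno
        rw [Finset.card_eq_zero.mpr]
        ext p; simp [hno p]
  rw [hsplit]
  calc ∑ t ∈ univ.filter (fun j : Fin k => ∃ p, f p = some j),
          (univ.filter fun p => f p = some t).card
      ≤ ∑ _t ∈ univ.filter (fun j : Fin k => ∃ p, f p = some j), 3 :=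
        Finset.sum_le_sum (fun t _ => h t)
    _ = 3 * openCount f := by rw [Finset.sum_const, openCount]; ring

lemma exists_available {k : ℕ} (f : P → Option (Fin k)) (i : P)
    (hcard : Fintype.card P = 3 * k) (hInv : SdInv f) (hi : f i = none) :
    ∃ j, Available f i j := by
  have hfib := fiber_sum f
  have hocc := occupied_bound f hInv
  have hole := openCount_le f
  have hrci : roommateCount f i = 0 := by simp [roommateCount, hi]
  by_cases hoc : openCount f = k
  · -- all rooms opened; find a deficient room
    have hiu : i ∈ univ.filter fun p => f p = none := by simp [hi]
    have h1 : 1 ≤ (univ.filter fun p => f p = none).card := Finset.card_pos.mpr ⟨i, hiu⟩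
    have hdef : ∃ t : Fin k, (univ.filter fun p => f p = some t).card ≤ 2 := by
      by_contra hc
      push_neg at hc
      have : 3 * k ≤ ∑ t : Fin k, (univ.filter fun p => f p = some t).card := by
        calc 3 * k = ∑ _t : Fin k, 3 := by rw [Finset.sum_const]; simp [mul_comm]
          _ ≤ _ := Finset.sum_le_sum (fun t _ => hc t)
      omega
    obtain ⟨t, ht⟩ := hdef
    have htocc : ∃ p, f p = some t := by
      have : (univ.filter fun j : Fin k => ∃ p, f p = some j) = univ := by
        apply Finset.eq_univ_of_card
        rw [← openCount, hoc]; simp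
      have := Finset.eq_univ_iff_forall.mp this t
      rw [Finset.mem_filter] at this
      exact this.2
    obtain ⟨j, hj⟩ := htocc
    refine ⟨j, ?_, ?_, ?_⟩
    · intro hji; rw [hji, hi] at hj; exact nomatch hj
    · left
      have := rc_succ f j t hj
      omega
    · intro _; rw [hj]; exact fun h => nomatch h
  · -- some room unopened: at least 3 unassigned, pick j ≠ i unassigned
    have hoclt : openCount f < k := lt_of_le_of_ne hole hoc
    have h2 : 2 ≤ (univ.filter fun p => f p = none).card := by omega
    obtain ⟨a, ha, b, hb, hab⟩ := Finset.one_lt_card.mp (by omega :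
      1 < (univ.filter fun p => f p = none).card)
    rw [Finset.mem_filter] at ha hb
    by_cases hai : a = i
    · refine ⟨b, ?_, Or.inl ?_, fun hk => absurd hk hoc⟩
      · rw [hai] at hab; exact Ne.symm hab
      · have : roommateCount f b = 0 := by simp [roommateCount, hb.2]
        omega
    · refine ⟨a, hai, Or.inl ?_, fun hk => absurd hk hoc⟩
      have : roommateCount f a = 0 := by simp [roommateCount, ha.2]
      omega

lemma sdStep_assigns {k : ℕ} (rk : P → P → ℕ) (f : P → Option (Fin k)) (i : P)
    (hcard : Fintype.card P = 3 * k) (hInv : SdInv f) :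
    sdStep rk f i i ≠ none := by
  by_cases hfi : f i = none
  · rcases sdStep_cases rk f i with ⟨hno, -⟩ | ⟨j, hav, hcase⟩
    · exact absurd (exists_available f i hcard hInv hfi) hno
    rcases hcase with ⟨t, hfi', -⟩ | ⟨t, -, -, he⟩ | ⟨-, hfj, hfr, -⟩ | ⟨t, -, -, -, he⟩
    · rw [hfi] at hfi'; exact nomatch hfi'
    · rw [he]; simp
    · exfalso
      have hoc : openCount f ≠ k := fun hk => (hav.2.2 hk) hfj
      exact freshRoom_ne_none f (lt_of_le_of_ne (openCount_le f) hoc) hfr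
    · rw [he]; simp
  · exact sdStep_ne_none rk f i i hfi

lemma sdRun_aux {k : ℕ} (rk : P → P → ℕ) (hcard : Fintype.card P = 3 * k) :
    ∀ (l : List P) (f : P → Option (Fin k)), SdInv f →
      SdInv (l.foldl (sdStep rk) f) ∧
      ∀ p, (f p ≠ none ∨ p ∈ l) → l.foldl (sdStep rk) f p ≠ none := by
  intro l
  induction l with
  | nil =>
      intro f hf
      refine ⟨hf, fun p hp => ?_⟩
      rcases hp with h | h
      · exact h
      · simp at h
  | cons i l ih =>
      intro f hf
      have h1 := inv_sdStep rk f i hf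
      obtain ⟨hI, hA⟩ := ih (sdStep rk f i) h1
      refine ⟨hI, fun p hp => ?_⟩
      simp only [List.foldl_cons]
      rcases hp with h | h
      · exact hA p (Or.inl (sdStep_ne_none rk f i p h))
      · rcases List.mem_cons.mp h with rfl | hpl
        · exact hA p (Or.inl (sdStep_assigns rk f p hcard hf))
        · exact hA p (Or.inr hpl)

theorem sd_best_produces_feasible_assignment' (k : ℕ) (rk : P → P → ℕ)
    (hcard : Fintype.card P = 3 * k)
    (order : List P) (hall : ∀ p : P, p ∈ order) :
    (∀ p : P, ∃ j : Fin k, (order.foldl (sdStep rk) fun _ => none) p = some j) ∧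
    (∀ j : Fin k,
      (univ.filter fun p : P =>
        (order.foldl (sdStep rk) (fun _ => (none : Option (Fin k)))) p = some j).card = 3) := by
  set f : P → Option (Fin k) := order.foldl (sdStep rk) fun _ => none with hf
  have hinv0 : SdInv (fun _ : P => (none : Option (Fin k))) := by
    intro t
    rw [Finset.card_eq_zero.mpr]
    · omega
    · ext p; simp
  obtain ⟨hInv, hAss⟩ := sdRun_aux rk hcard order _ hinv0
  have hassigned : ∀ p : P, f p ≠ none := fun p => hAss p (Or.inr (hall p))
  have hsome : ∀ p : P, ∃ j : Fin k, f p = some j := by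
    intro p
    rcases Option.ne_none_iff_exists'.mp (hassigned p) with ⟨j, hj⟩
    exact ⟨j, hj⟩
  refine ⟨hsome, ?_⟩
  have hfib := fiber_sum f
  have hnone0 : (univ.filter fun p => f p = none).card = 0 := by
    rw [Finset.card_eq_zero.mpr]
    ext p; simp [hassigned p]
  have hsum : ∑ t : Fin k, (univ.filter fun p => f p = some t).card = 3 * k := by
    omega
  intro j
  by_contra hne
  have hlt : (univ.filter fun p => f p = some j).card < 3 :=
    lt_of_le_of_ne (hInv j) hne
  have : ∑ t : Fin k, (univ.filter fun p => f p = some t).card < ∑ _t : Fin k, 3 :=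
    Finset.sum_lt_sum (fun t _ => hInv t) ⟨j, mem_univ j, hlt⟩
  rw [Finset.sum_const] at this
  simp only [Finset.card_univ, Fintype.card_fin, smul_eq_mul] at this
  omega

/-- With `3k` players having strict complete preferences, `k` rooms of size 3 and
best-roommate comparison, serial dictatorship produces a feasible assignment:
every player ends up in a room, and every room has exactly 3 players. -/
theorem sd_best_produces_feasible_assignment (k : ℕ) (rk : P → P → ℕ)
    (hstrict : ∀ i j j' : P, j ≠ i → j' ≠ i → rk i j = rk i j' → j = j')
    (hcard : Fintype.card P = 3 * k)
    (order : List P) (hnodup : order.Nodup) (hall : ∀ p : P, p ∈ order) :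
    (∀ p : P, ∃ j : Fin k, sdRun (k := k) rk order p = some j) ∧
    (∀ j : Fin k,
      (univ.filter fun p : P => sdRun (k := k) rk order p = some j).card = 3) := by
  unfold sdRun
  have h := sd_best_produces_feasible_assignment' k rk hcard order hall
  exact ⟨h.1, h.2⟩

end
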